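/- Let p/q be a reduced fraction with 0 < p/q < 1 and q ≥ 2, and let x = (x_i)_{i≥1} be an infinite binary sequence containing both the factor 01 and the factor 10. Let y be the infinite binary sequence obtained from x by replacing every entry 0 by the q-digit word W^{01}_{p/q} and every entry 1 by the q-digit word W^{10}_{p/q}. Then y is not Sturmian: y contains two factors of equal length whose numbers of 1's differ by at least 2. -/

import Mathlib

/-- The 01-mechanical digit sequence of `r`: `α_j(r) = ⌈(j+1)r⌉ - ⌈jr⌉`. -/
noncomputable def alpha01 (r : ℚ) (j : ℕ) : ℤ := ⌈((j : ℚ) + 1) * r⌉ - ⌈(j : ℚ) * r⌉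

/-- The 10-mechanical digit sequence of `r`: `β_j(r) = ⌊(j+1)r⌋ - ⌊jr⌋`. -/
noncomputable def beta10 (r : ℚ) (j : ℕ) : ℤ := ⌊((j : ℚ) + 1) * r⌋ - ⌊(j : ℚ) * r⌋

/-- The 01-word of `r` of length `q`: `(α_1(r), …, α_q(r))`. -/
noncomputable def word01 (r : ℚ) (q : ℕ) : List ℤ := (List.range q).map fun i => alpha01 r (i + 1)

/-- The 10-word of `r` of length `q`: `(β_1(r), …, β_q(r))`. -/
noncomputable def word10 (r : ℚ) (q : ℕ) : List ℤ := (List.range q).map fun i => beta10 r (i + 1)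

lemma getD01 (r : ℚ) {q t : ℕ} (h : t < q) : (word01 r q).getD t 0 = alpha01 r (t + 1) := by
  unfold word01
  rw [List.getD_eq_getElem _ _ (by simpa using h)]
  simp

lemma getD10 (r : ℚ) {q t : ℕ} (h : t < q) : (word10 r q).getD t 0 = beta10 r (t + 1) := by
  unfold word10
  rw [List.getD_eq_getElem _ _ (by simpa using h)]
  simp

lemma teleA (r : ℚ) (n : ℕ) :
    ∑ t ∈ Finset.range n, alpha01 r (t + 1) = ⌈((n : ℚ) + 1) * r⌉ - ⌈1 * r⌉ := by
  induction n with
  | zero => simp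
  | succ k ih =>
    rw [Finset.sum_range_succ, ih]
    unfold alpha01
    push_cast
    ring

lemma teleB (r : ℚ) (n : ℕ) :
    ∑ t ∈ Finset.range n, beta10 r (t + 1) = ⌊((n : ℚ) + 1) * r⌋ - ⌊1 * r⌋ := by
  induction n with
  | zero => simp
  | succ k ih =>
    rw [Finset.sum_range_succ, ih]
    unfold beta10
    push_cast
    ring

/-- Substituting the 01- and 10-words of a reduced fraction `p/q`
(`0 < p/q < 1`, `q ≥ 2`) for the entries `0`, `1` of a binary sequence containing
both factors `01` and `10` yields a non-Sturmian sequence: it has two factors of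
equal length whose numbers of `1`'s differ by at least `2`. -/
theorem substitution_not_sturmian
    (p q : ℕ) (hp : 0 < p) (hpq : p < q) (hq : 2 ≤ q) (hcop : Nat.Coprime p q)
    (x : ℕ → ℤ) (hx01 : ∀ i, x i = 0 ∨ x i = 1)
    (h01 : ∃ i, x i = 0 ∧ x (i + 1) = 1)
    (h10 : ∃ i, x i = 1 ∧ x (i + 1) = 0)
    (y : ℕ → ℤ)
    (hy : ∀ k : ℕ, y k =
      (if x (k / q) = 0 then word01 ((p : ℚ) / q) q else word10 ((p : ℚ) / q) q).getD (k % q) 0) :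
    ∃ i j n : ℕ,
      2 ≤ |(∑ t ∈ Finset.range n, y (i + t)) - ∑ t ∈ Finset.range n, y (j + t)| := by
  obtain ⟨m, rfl⟩ : ∃ m, q = m + 2 := ⟨q - 2, by omega⟩
  set r : ℚ := (p : ℚ) / (m + 2 : ℕ) with hrdef
  have hm2 : ((m : ℚ) + 2) ≠ 0 := by positivity
  have hr0 : 0 < r := by
    apply div_pos (by exact_mod_cast hp)
    push_cast; positivity
  have hr1 : r < 1 := by
    rw [hrdef, div_lt_one (by push_cast; positivity)]
    exact_mod_cast hpq
  have hceilr : ⌈r⌉ = 1 := by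
    rw [Int.ceil_eq_iff]
    refine ⟨by push_cast; linarith, by push_cast; linarith⟩
  have hfloorr : ⌊r⌋ = 0 := by
    rw [Int.floor_eq_zero_iff]
    exact ⟨hr0.le, hr1⟩
  have hqr : ((m : ℚ) + 2) * r = (p : ℚ) := by
    rw [hrdef]; push_cast; field_simp
  have hq1r : ((m : ℚ) + 2 + 1) * r = (p : ℚ) + r := by
    rw [add_mul, hqr, one_mul]
  have hceilq : ⌈((m : ℚ) + 2) * r⌉ = (p : ℤ) := by
    rw [hqr]; exact Int.ceil_natCast p
  have hfloorq : ⌊((m : ℚ) + 2) * r⌋ = (p : ℤ) := by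
    rw [hqr]; exact Int.floor_natCast p
  -- last letters
  have halast : alpha01 r (m + 2) = 1 := by
    unfold alpha01
    push_cast
    rw [hq1r, add_comm ((p:ℚ)) r, Int.ceil_add_natCast, hceilq, hceilr]
    omega
  have hblast : beta10 r (m + 2) = 0 := by
    unfold beta10
    push_cast
    rw [hq1r, add_comm ((p:ℚ)) r, Int.floor_add_natCast, hfloorq, hfloorr]
    omega
  -- telescoping sums over range (m+1)
  have hsumA : ∑ t ∈ Finset.range (m + 1), alpha01 r (t + 1) = (p : ℤ) - 1 := by
    rw [teleA]
    have e1 : (((m + 1 : ℕ) : ℚ) + 1) = (m : ℚ) + 2 := by push_cast; ring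
    rw [e1, hceilq, one_mul, hceilr]
  have hsumB : ∑ t ∈ Finset.range (m + 1), beta10 r (t + 1) = (p : ℤ) := by
    rw [teleB]
    have e1 : (((m + 1 : ℕ) : ℚ) + 1) = (m : ℚ) + 2 := by push_cast; ring
    rw [e1, hfloorq, one_mul, hfloorr]
    omega
  obtain ⟨a, ha0, ha1⟩ := h01
  obtain ⟨b, hb1, hb0⟩ := h10
  set q := m + 2 with hqdef
  refine ⟨q * a + (m + 1), q * b + (m + 1), q, ?_⟩
  have hdiv0 : ∀ c : ℕ, (q * c + (m + 1)) / q = c := by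
    intro c
    rw [Nat.mul_add_div (by omega)]
    simp [Nat.div_eq_of_lt (by omega : m + 1 < q)]
  have hmod0 : ∀ c : ℕ, (q * c + (m + 1)) % q = m + 1 := by
    intro c
    rw [Nat.mul_add_mod]
    exact Nat.mod_eq_of_lt (by omega)
  have hdiv1 : ∀ c t : ℕ, t < q → (q * c + t) / q = c := by
    intro c t ht
    rw [Nat.mul_add_div (by omega)]
    simp [Nat.div_eq_of_lt ht]
  have hmod1 : ∀ c t : ℕ, t < q → (q * c + t) % q = t := by
    intro c t ht
    rw [Nat.mul_add_mod]
    exact Nat.mod_eq_of_lt ht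
  -- first sum
  have hS1 : ∑ t ∈ Finset.range q, y (q * a + (m + 1) + t) = (p : ℤ) + 1 := by
    rw [hqdef, Finset.sum_range_succ']
    have hfirst : y (q * a + (m + 1) + 0) = 1 := by
      rw [add_zero, hy, hdiv0, hmod0, ha0, if_pos rfl, getD01 r (by omega : m + 1 < q)]
      exact halast
    have hrest : ∀ t ∈ Finset.range (m + 1),
        y (q * a + (m + 1) + (t + 1)) = beta10 r (t + 1) := by
      intro t ht
      simp only [Finset.mem_range] at ht
      have harr : q * a + (m + 1) + (t + 1) = q * (a + 1) + t := by
        rw [hqdef]; ring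
      rw [harr, hy, hdiv1 _ _ (by omega), hmod1 _ _ (by omega), ha1]
      rw [if_neg (by norm_num), getD10 r (by omega : t < q)]
    rw [Finset.sum_congr rfl hrest, hsumB, hfirst]
  -- second sum
  have hS2 : ∑ t ∈ Finset.range q, y (q * b + (m + 1) + t) = (p : ℤ) - 1 := by
    rw [hqdef, Finset.sum_range_succ']
    have hfirst : y (q * b + (m + 1) + 0) = 0 := by
      rw [add_zero, hy, hdiv0, hmod0, hb1, if_neg (by norm_num), getD10 r (by omega : m + 1 < q)]
      exact hblast
    have hrest : ∀ t ∈ Finset.range (m + 1),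
        y (q * b + (m + 1) + (t + 1)) = alpha01 r (t + 1) := by
      intro t ht
      simp only [Finset.mem_range] at ht
      have harr : q * b + (m + 1) + (t + 1) = q * (b + 1) + t := by
        rw [hqdef]; ring
      rw [harr, hy, hdiv1 _ _ (by omega), hmod1 _ _ (by omega), hb0]
      rw [if_pos rfl, getD01 r (by omega : t < q)]
    rw [Finset.sum_congr rfl hrest, hsumA, hfirst]
    ring
  rw [hS1, hS2]
  have : (p : ℤ) + 1 - ((p : ℤ) - 1) = 2 := by ring
  rw [this]
  norm_num
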